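/- Consider N linear subsystems ẋ_i = A_i x_i + B_i u_i, y_i = C_i x_i, where each C_i ∈ ℝ^{p_i × n_i} has full row rank, interconnected through u = M¹¹y + M¹²d, e = M²¹y + M²²d, where the diagonal blocks M¹¹_{ii} of M¹¹ (mapping y_i to u_i) are zero and, for each i, the rows of the block of M mapping (y,d) to u_i (i.e., the rows of [M¹¹_{i1} ⋯ M¹¹_{iN} M¹²_i]) are linearly independent. Let W be a real symmetric matrix. Then the following are equivalent: (i) there exist real symmetric positive semidefinite P_1,…,P_N such that for all x_1,…,x_N and d, with y_i = C_i x_i, u = M¹¹y + M¹²d, e = M²¹y + M²²d, one has ∑_{i=1}^N ( x_iᵀ(A_iᵀP_i + P_iA_i)x_i + 2 x_iᵀ P_i B_i u_i ) ≤ [d;e]ᵀ W [d;e]; (ii) there exist real symmetric matrices X_1,…,X_N and positive semidefinite P_1,…,P_N such that for each i and all x_i, u_i, with y_i = C_i x_i, x_iᵀ(A_iᵀP_i + P_iA_i)x_i + 2 x_iᵀ P_i B_i u_i ≤ [u_i;y_i]ᵀ X_i [u_i;y_i], and for all y, d, with u = M¹¹y + M¹²d, e = M²¹y + M²²d, ∑_{i=1}^N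 [u_i;y_i]ᵀ X_i [u_i;y_i] ≤ [d;e]ᵀ W [d;e]. -/

import Mathlib

open Matrix

lemma lin_bound_zero {b K : ℝ} (h : ∀ τ : ℝ, b * τ ≤ K) : b = 0 := by
  by_contra hb
  have h1 := h ((|K| + 1) / b)
  rw [mul_div_cancel₀ _ hb] at h1
  have := abs_nonneg K
  have := le_abs_self K
  linarith

lemma mulVec_surj_of_li_rows {k : Type*} [Fintype k] {q : ℕ}
    (A : Matrix (Fin q) k ℝ) (hA : LinearIndependent ℝ (fun r => A r)) :
    Function.Surjective (A.mulVec) := by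
  intro yv
  have hinj : Function.Injective ((A * Aᵀ).mulVecLin) := by
    rw [← LinearMap.ker_eq_bot, LinearMap.ker_eq_bot']
    intro z hz
    simp only [mulVecLin_apply] at hz
    have h2 : (Aᵀ *ᵥ z) ⬝ᵥ (Aᵀ *ᵥ z) = 0 := by
      have h0 : z ⬝ᵥ ((A * Aᵀ) *ᵥ z) = 0 := by rw [hz]; simp
      rwa [← mulVec_mulVec, dotProduct_mulVec, ← mulVec_transpose] at h0
    rw [dotProduct_self_eq_zero] at h2
    have h3 : z ᵥ* A = 0 := by rwa [← mulVec_transpose]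
    have h4 := (Fintype.linearIndependent_iff.mp hA) z ?_
    · funext i; exact h4 i
    · funext j
      have := congrFun h3 j
      simpa [vecMul, dotProduct] using this
  have hsurj : Function.Surjective ((A * Aᵀ).mulVecLin) :=
    LinearMap.injective_iff_surjective.mp hinj
  obtain ⟨z, hz⟩ := hsurj yv
  exact ⟨Aᵀ *ᵥ z, by rw [mulVec_mulVec]; exact hz⟩

lemma exists_solution {n : ℕ} (T : Matrix (Fin n) (Fin n) ℝ) (hT : Tᵀ = T)
    (w : Fin n → ℝ) (hw : ∀ z, T *ᵥ z = 0 → w ⬝ᵥ z = 0) : ∃ h, T *ᵥ h = w := by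
  set f := T.mulVecLin with hf
  have hdisj : Disjoint (LinearMap.range f) (LinearMap.ker f) := by
    rw [disjoint_iff_inf_le]
    rintro x ⟨⟨h, rfl⟩, hx2⟩
    have hx2' : T *ᵥ (T *ᵥ h) = 0 := hx2
    have : (T *ᵥ h) ⬝ᵥ (T *ᵥ h) = 0 := by
      rw [dotProduct_mulVec, ← mulVec_transpose, hT, hx2', dotProduct_comm, dotProduct_zero]
    have : (T *ᵥ h) = 0 := dotProduct_self_eq_zero.mp this
    simpa [f] using this
  have htop : LinearMap.range f ⊔ LinearMap.ker f = ⊤ := by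
    apply Submodule.eq_top_of_finrank_eq
    have h1 := Submodule.finrank_sup_add_finrank_inf_eq (LinearMap.range f) (LinearMap.ker f)
    rw [hdisj.eq_bot] at h1
    have h2 := LinearMap.finrank_range_add_finrank_ker f
    simp only [finrank_bot, add_zero] at h1
    rw [h1, h2]
  have hw' : w ∈ LinearMap.range f ⊔ LinearMap.ker f := htop ▸ Submodule.mem_top
  obtain ⟨a, ha, b, hb, hab⟩ := Submodule.mem_sup.mp hw'
  obtain ⟨h, rfl⟩ := ha
  have hTb : T *ᵥ b = 0 := hb
  have hwb : w ⬝ᵥ b = 0 := hw b hTb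
  have hab' : w = T *ᵥ h + b := by rw [← hab]; rfl
  have : b ⬝ᵥ b = 0 := by
    have h1 : (T *ᵥ h) ⬝ᵥ b = 0 := by
      rw [dotProduct_comm, dotProduct_mulVec, ← mulVec_transpose, hT, hTb, zero_dotProduct]
    have := hwb
    rw [hab', add_dotProduct, h1, zero_add] at this
    exact this
  have hb0 : b = 0 := dotProduct_self_eq_zero.mp this
  exact ⟨h, by rw [hab', hb0, add_zero]⟩

lemma tripleProd2 {a b k k' : Type*} [Fintype a] [Fintype b] [Fintype k] [Fintype k']
    (E : Matrix a k ℝ) (F : Matrix a b ℝ) (G : Matrix b k' ℝ) (c : k → ℝ) (c' : k' → ℝ) :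
    c ⬝ᵥ ((Eᵀ * F * G) *ᵥ c') = (E *ᵥ c) ⬝ᵥ (F *ᵥ (G *ᵥ c')) := by
  rw [← mulVec_mulVec, ← mulVec_mulVec, dotProduct_mulVec, vecMul_transpose]

lemma twoProd {a k k' : Type*} [Fintype a] [Fintype k] [Fintype k']
    (E : Matrix a k ℝ) (G : Matrix a k' ℝ) (c : k → ℝ) (c' : k' → ℝ) :
    c ⬝ᵥ ((Eᵀ * G) *ᵥ c') = (E *ᵥ c) ⬝ᵥ (G *ᵥ c') := by
  rw [← mulVec_mulVec, dotProduct_mulVec, vecMul_transpose]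

lemma dot_mulVec_symm {n : Type*} [Fintype n] {T : Matrix n n ℝ} (hT : Tᵀ = T)
    (a b : n → ℝ) : a ⬝ᵥ (T *ᵥ b) = b ⬝ᵥ (T *ᵥ a) := by
  rw [dotProduct_mulVec]
  conv_lhs => rw [← hT]
  rw [vecMul_transpose, dotProduct_comm]

lemma lemmaA {n m p : ℕ} (Q : Matrix (Fin n) (Fin n) ℝ) (hQ : Qᵀ = Q)
    (R : Matrix (Fin n) (Fin m) ℝ) (C : Matrix (Fin p) (Fin n) ℝ)
    (hCsurj : Function.Surjective C.mulVec)
    (H1 : ∀ v, C *ᵥ v = 0 → v ⬝ᵥ (Q *ᵥ v) ≤ 0)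
    (H2 : ∀ v, C *ᵥ v = 0 → v ⬝ᵥ (Q *ᵥ v) = 0 → Q *ᵥ v = 0 ∧ Rᵀ *ᵥ v = 0) :
    ∃ X : Matrix (Fin (m+p)) (Fin (m+p)) ℝ, X.IsSymm ∧
      (∀ (x : Fin n → ℝ) (u : Fin m → ℝ),
        x ⬝ᵥ (Q *ᵥ x) + 2*(x ⬝ᵥ (R *ᵥ u)) ≤
          (Fin.append u (C *ᵥ x)) ⬝ᵥ (X *ᵥ Fin.append u (C *ᵥ x))) ∧
      (∀ (u : Fin m → ℝ) (y : Fin p → ℝ), ∃ x, C *ᵥ x = y ∧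
        x ⬝ᵥ (Q *ᵥ x) + 2*(x ⬝ᵥ (R *ᵥ u)) = (Fin.append u y) ⬝ᵥ (X *ᵥ Fin.append u y)) := by
  classical
  -- right inverse D of C
  obtain ⟨D, hD⟩ : ∃ D : Matrix (Fin n) (Fin p) ℝ, C * D = 1 := by
    choose Df hDf using hCsurj
    refine ⟨Matrix.of (fun i j => Df (Pi.single j 1) i), ?_⟩
    ext i j
    have h1 := congrFun (hDf (Pi.single j 1)) i
    simpa [Matrix.mul_apply, Matrix.mulVec, dotProduct, Matrix.one_apply,
      Pi.single_apply] using h1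
  have hDy : ∀ y : Fin p → ℝ, C *ᵥ (D *ᵥ y) = y := by
    intro y; rw [mulVec_mulVec, hD, one_mulVec]
  set V : Matrix (Fin n) (Fin n) ℝ := 1 - D * C with hVdef
  have hCV : ∀ z, C *ᵥ (V *ᵥ z) = 0 := by
    intro z
    rw [mulVec_mulVec, Matrix.mul_sub, Matrix.mul_one, ← Matrix.mul_assoc, hD,
      Matrix.one_mul, sub_self, zero_mulVec]
  have hVfix : ∀ v, C *ᵥ v = 0 → V *ᵥ v = v := by
    intro v hv
    rw [sub_mulVec, one_mulVec, ← mulVec_mulVec, hv, mulVec_zero, sub_zero]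
  have hVVm : V * V = V := by
    have h1 : D * C * (D * C) = D * C := by
      rw [Matrix.mul_assoc D C (D*C), ← Matrix.mul_assoc C D C, hD, Matrix.one_mul]
    rw [hVdef, Matrix.mul_sub, Matrix.sub_mul, Matrix.sub_mul]
    simp only [Matrix.mul_one, Matrix.one_mul, h1]
    abel
  set T : Matrix (Fin n) (Fin n) ℝ := -(Vᵀ * Q * V) with hTdef
  have hT : Tᵀ = T := by
    rw [hTdef, transpose_neg, transpose_mul, transpose_mul, transpose_transpose, hQ,
      Matrix.mul_assoc]
  have hquadT : ∀ z, z ⬝ᵥ (T *ᵥ z) = -((V *ᵥ z) ⬝ᵥ (Q *ᵥ (V *ᵥ z))) := by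
    intro z
    rw [hTdef, neg_mulVec, dotProduct_neg, tripleProd2]
  have hTpsd : ∀ z, 0 ≤ z ⬝ᵥ (T *ᵥ z) := by
    intro z
    rw [hquadT]
    have := H1 (V *ᵥ z) (hCV z)
    linarith
  have hkerT : ∀ z, T *ᵥ z = 0 → Q *ᵥ (V *ᵥ z) = 0 ∧ Rᵀ *ᵥ (V *ᵥ z) = 0 := by
    intro z hz
    apply H2 _ (hCV z)
    have h0 : z ⬝ᵥ (T *ᵥ z) = 0 := by rw [hz, dotProduct_zero]
    rw [hquadT] at h0
    linarith
  have hTV : T * V = T := by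
    rw [hTdef, Matrix.neg_mul, Matrix.mul_assoc, hVVm]
  -- solver
  have hsolve : ∀ (x0 : Fin n → ℝ) (u0 : Fin m → ℝ),
      ∃ h, T *ᵥ h = Vᵀ *ᵥ (Q *ᵥ x0 + R *ᵥ u0) := by
    intro x0 u0
    apply exists_solution T hT
    intro z hz
    obtain ⟨h1, h2⟩ := hkerT z hz
    rw [dotProduct_comm, dotProduct_mulVec, vecMul_transpose, dotProduct_add,
      dot_mulVec_symm hQ, h1, dotProduct_zero, dotProduct_mulVec (V *ᵥ z) R u0,
      ← mulVec_transpose, h2, zero_dotProduct, add_zero]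
  obtain ⟨Y1, hY1⟩ : ∃ Y1 : Matrix (Fin n) (Fin m) ℝ, T * Y1 = Vᵀ * R := by
    choose g hg using fun j : Fin m => hsolve 0 (Pi.single j 1)
    refine ⟨Matrix.of (fun i j => g j i), ?_⟩
    ext i j
    have h1 := congrFun (hg j) i
    simp only [mulVec_zero, zero_add] at h1
    rw [mulVec_mulVec, mulVec_single] at h1
    simp only [MulOpposite.op_one, one_smul, Matrix.col_apply] at h1
    rw [Matrix.mul_apply]
    rw [show ∑ k, T i k * (Matrix.of (fun i j => g j i)) k j = (T *ᵥ g j) i by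
      simp [Matrix.mulVec, dotProduct]]
    exact h1
  obtain ⟨Y2, hY2⟩ : ∃ Y2 : Matrix (Fin n) (Fin p) ℝ, T * Y2 = Vᵀ * (Q * D) := by
    choose g hg using fun j : Fin p => hsolve (D *ᵥ Pi.single j 1) 0
    refine ⟨Matrix.of (fun i j => g j i), ?_⟩
    ext i j
    have h1 := congrFun (hg j) i
    simp only [mulVec_zero, add_zero] at h1
    rw [mulVec_mulVec, mulVec_mulVec, mulVec_single, Matrix.mul_assoc] at h1
    simp only [MulOpposite.op_one, one_smul, Matrix.col_apply] at h1
    rw [Matrix.mul_apply]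
    rw [show ∑ k, T i k * (Matrix.of (fun i j => g j i)) k j = (T *ᵥ g j) i by
      simp [Matrix.mulVec, dotProduct]]
    exact h1
  -- selector matrices
  set U1 : Matrix (Fin m) (Fin (m+p)) ℝ :=
    Matrix.of (fun j k => Fin.append (fun j' : Fin m => if j' = j then (1:ℝ) else 0)
      (fun _ : Fin p => (0:ℝ)) k) with hU1def
  set U2 : Matrix (Fin p) (Fin (m+p)) ℝ :=
    Matrix.of (fun j k => Fin.append (fun _ : Fin m => (0:ℝ))
      (fun j' : Fin p => if j' = j then (1:ℝ) else 0) k) with hU2def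
  have hU1 : ∀ (u : Fin m → ℝ) (yv : Fin p → ℝ), U1 *ᵥ (Fin.append u yv) = u := by
    intro u yv; funext j
    show (Fin.append (fun j' : Fin m => if j' = j then (1:ℝ) else 0)
      (fun _ : Fin p => (0:ℝ))) ⬝ᵥ (Fin.append u yv) = u j
    rw [dotProduct, Fin.sum_univ_add]
    simp [Fin.append_left, Fin.append_right, ite_mul, Finset.sum_ite_eq']
  have hU2 : ∀ (u : Fin m → ℝ) (yv : Fin p → ℝ), U2 *ᵥ (Fin.append u yv) = yv := by
    intro u yv; funext j
    show (Fin.append (fun _ : Fin m => (0:ℝ))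
      (fun j' : Fin p => if j' = j then (1:ℝ) else 0)) ⬝ᵥ (Fin.append u yv) = yv j
    rw [dotProduct, Fin.sum_univ_add]
    simp [Fin.append_left, Fin.append_right, ite_mul, Finset.sum_ite_eq']
  set S : Matrix (Fin (m+p)) (Fin (m+p)) ℝ :=
    U1ᵀ * (Y1ᵀ * T * Y1) * U1 + U1ᵀ * (Rᵀ * D) * U2 + U1ᵀ * (Y1ᵀ * T * Y2) * U2
    + U2ᵀ * (Dᵀ * R) * U1 + U2ᵀ * (Y2ᵀ * T * Y1) * U1
    + U2ᵀ * (Dᵀ * Q * D) * U2 + U2ᵀ * (Y2ᵀ * T * Y2) * U2 with hSdef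
  have hXc : ∀ c : Fin (m+p) → ℝ,
      c ⬝ᵥ (((1/2 : ℝ) • (S + Sᵀ)) *ᵥ c) = c ⬝ᵥ (S *ᵥ c) := by
    intro c
    rw [smul_mulVec, dotProduct_smul, add_mulVec, dotProduct_add,
      dotProduct_mulVec c Sᵀ c, vecMul_transpose, dotProduct_comm (S *ᵥ c) c]
    simp only [smul_eq_mul]
    ring
  have hval : ∀ (u : Fin m → ℝ) (yv : Fin p → ℝ),
      (Fin.append u yv) ⬝ᵥ (S *ᵥ (Fin.append u yv)) =
        (D *ᵥ yv) ⬝ᵥ (Q *ᵥ (D *ᵥ yv)) + 2*((D *ᵥ yv) ⬝ᵥ (R *ᵥ u))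
        + (Y1 *ᵥ u + Y2 *ᵥ yv) ⬝ᵥ (T *ᵥ (Y1 *ᵥ u + Y2 *ᵥ yv)) := by
    intro u yv
    rw [hSdef]
    simp only [add_mulVec, dotProduct_add, tripleProd2, twoProd, hU1 u yv, hU2 u yv,
      mulVec_add, add_dotProduct, dotProduct_add]
    rw [dotProduct_comm (R *ᵥ u) (D *ᵥ yv)]
    ring
  -- master identity
  have hmain : ∀ (x : Fin n → ℝ) (u : Fin m → ℝ),
      (Fin.append u (C *ᵥ x)) ⬝ᵥ (S *ᵥ (Fin.append u (C *ᵥ x)))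
        - (x ⬝ᵥ (Q *ᵥ x) + 2*(x ⬝ᵥ (R *ᵥ u)))
      = ((x - D *ᵥ (C *ᵥ x)) - (Y1 *ᵥ u + Y2 *ᵥ (C *ᵥ x))) ⬝ᵥ
          (T *ᵥ ((x - D *ᵥ (C *ᵥ x)) - (Y1 *ᵥ u + Y2 *ᵥ (C *ᵥ x)))) := by
    intro x u
    set y := C *ᵥ x with hy
    set xh := D *ᵥ y with hxh
    set v := x - xh with hv
    set z := Y1 *ᵥ u + Y2 *ᵥ y with hz
    have hxv : x = xh + v := by rw [hv]; ring
    have hCv : C *ᵥ v = 0 := by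
      rw [hv, mulVec_sub, ← hy, hxh, hDy, sub_self]
    have hVv : V *ᵥ v = v := hVfix v hCv
    have hTz : T *ᵥ z = Vᵀ *ᵥ (Q *ᵥ xh + R *ᵥ u) := by
      rw [hz, mulVec_add, mulVec_mulVec, mulVec_mulVec, hY1, hY2, hxh,
        mulVec_add, ← mulVec_mulVec, ← mulVec_mulVec, ← mulVec_mulVec]
      ring
    have e1 : x ⬝ᵥ (Q *ᵥ x) = xh ⬝ᵥ (Q *ᵥ xh) + 2*(v ⬝ᵥ (Q *ᵥ xh)) + v ⬝ᵥ (Q *ᵥ v) := by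
      conv_lhs => rw [hxv]
      rw [mulVec_add, dotProduct_add, add_dotProduct, add_dotProduct,
        dot_mulVec_symm hQ xh v]
      ring
    have e2 : x ⬝ᵥ (R *ᵥ u) = xh ⬝ᵥ (R *ᵥ u) + v ⬝ᵥ (R *ᵥ u) := by
      conv_lhs => rw [hxv]
      rw [add_dotProduct]
    have e3 : v ⬝ᵥ (Q *ᵥ v) = -(v ⬝ᵥ (T *ᵥ v)) := by
      have h0 := hquadT v
      rw [hVv] at h0
      linarith
    have e4 : v ⬝ᵥ (Q *ᵥ xh) + v ⬝ᵥ (R *ᵥ u) = v ⬝ᵥ (T *ᵥ z) := by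
      rw [hTz]
      conv_rhs => rw [dotProduct_mulVec, vecMul_transpose, hVv]
      rw [dotProduct_add]
    have e5 : z ⬝ᵥ (T *ᵥ v) = v ⬝ᵥ (T *ᵥ z) := dot_mulVec_symm hT z v
    have e6 := hval u y
    have e7 : (v - z) ⬝ᵥ (T *ᵥ (v - z))
        = v ⬝ᵥ (T *ᵥ v) - v ⬝ᵥ (T *ᵥ z) - z ⬝ᵥ (T *ᵥ v) + z ⬝ᵥ (T *ᵥ z) := by
      rw [mulVec_sub, sub_dotProduct, dotProduct_sub, dotProduct_sub]
      ring
    rw [e6]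
    linarith
  refine ⟨(1/2 : ℝ) • (S + Sᵀ), ?_, ?_, ?_⟩
  · show ((1/2 : ℝ) • (S + Sᵀ))ᵀ = (1/2 : ℝ) • (S + Sᵀ)
    rw [transpose_smul, transpose_add, transpose_transpose]
    exact congrArg _ (add_comm _ _)
  · intro x u
    rw [hXc]
    have h1 := hmain x u
    have h2 := hTpsd ((x - D *ᵥ (C *ᵥ x)) - (Y1 *ᵥ u + Y2 *ᵥ (C *ᵥ x)))
    linarith
  · intro u y
    set z := Y1 *ᵥ u + Y2 *ᵥ y with hz
    refine ⟨D *ᵥ y + V *ᵥ z, ?_, ?_⟩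
    · rw [mulVec_add, hDy, hCV, add_zero]
    · rw [hXc]
      have hCx : C *ᵥ (D *ᵥ y + V *ᵥ z) = y := by
        rw [mulVec_add, hDy, hCV, add_zero]
      have h1 := hmain (D *ᵥ y + V *ᵥ z) u
      rw [hCx] at h1
      have hvz : (D *ᵥ y + V *ᵥ z - D *ᵥ y) - z = V *ᵥ z - z := by ring
      rw [hvz] at h1
      have hTzero : T *ᵥ (V *ᵥ z - z) = 0 := by
        rw [mulVec_sub, mulVec_mulVec, hTV, sub_self]
      rw [hTzero, dotProduct_zero] at h1
      linarith

lemma fin_append_zero {a b : ℕ} : (Fin.append (0 : Fin a → ℝ) (0 : Fin b → ℝ)) = 0 := by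
  funext k
  cases k using Fin.addCases with
  | left k => simp
  | right k => simp



/-- **Theorem 1 (equivalence for linear subsystems).** `N` linear subsystems
`ẋᵢ = Aᵢxᵢ + Bᵢuᵢ`, `yᵢ = Cᵢxᵢ` with each `Cᵢ` of full row rank are interconnected by
`u = M¹¹y + M¹²d`, `e = M²¹y + M²²d` (blockwise), where the diagonal blocks `M¹¹ᵢᵢ` are
zero and for each `i` the rows of `[M¹¹ᵢ₁ ⋯ M¹¹ᵢ_N  M¹²ᵢ]` are linearly independent
(Assumption 1). For a symmetric `W`, the following are equivalent:
(i) there exist PSD `Pᵢ` such that `V = ∑ xᵢᵀPᵢxᵢ` certifies global dissipativity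
    w.r.t. `[d;e]ᵀW[d;e]`;
(ii) there exist symmetric `Xᵢ` and PSD `Pᵢ` such that each subsystem is dissipative
    w.r.t. `[uᵢ;yᵢ]ᵀXᵢ[uᵢ;yᵢ]` with storage function `xᵢᵀPᵢxᵢ`, and the `Xᵢ` satisfy
    the global constraint. -/
theorem stmt_2 {N : ℕ} {n m p : Fin N → ℕ} {pd me : ℕ}
    (A : ∀ i, Matrix (Fin (n i)) (Fin (n i)) ℝ)
    (B : ∀ i, Matrix (Fin (n i)) (Fin (m i)) ℝ)
    (C : ∀ i, Matrix (Fin (p i)) (Fin (n i)) ℝ)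
    (hC : ∀ i, LinearIndependent ℝ (fun r : Fin (p i) => C i r))
    (M11 : ∀ i j, Matrix (Fin (m i)) (Fin (p j)) ℝ)
    (M12 : ∀ i, Matrix (Fin (m i)) (Fin pd) ℝ)
    (M21 : ∀ j, Matrix (Fin me) (Fin (p j)) ℝ)
    (M22 : Matrix (Fin me) (Fin pd) ℝ)
    (hMdiag : ∀ i, M11 i i = 0)
    (hMrows : ∀ i, LinearIndependent ℝ (fun r : Fin (m i) =>
      Sum.elim (fun jl : Σ j, Fin (p j) => M11 i jl.1 r jl.2) (fun l : Fin pd => M12 i r l)))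
    (W : Matrix (Fin (pd + me)) (Fin (pd + me)) ℝ) (hWsymm : W.IsSymm) :
    (∃ P : ∀ i, Matrix (Fin (n i)) (Fin (n i)) ℝ,
      (∀ i, (P i).PosSemidef) ∧
      (∀ (x : ∀ i, Fin (n i) → ℝ) (d : Fin pd → ℝ),
        (∑ i, ((x i) ⬝ᵥ (((A i)ᵀ * P i + P i * A i) *ᵥ (x i))
              + 2 * ((x i) ⬝ᵥ ((P i * B i) *ᵥ
                  ((∑ j, (M11 i j) *ᵥ ((C j) *ᵥ (x j))) + (M12 i) *ᵥ d))))) ≤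
          (Fin.append d ((∑ j, (M21 j) *ᵥ ((C j) *ᵥ (x j))) + M22 *ᵥ d)) ⬝ᵥ
            (W *ᵥ (Fin.append d ((∑ j, (M21 j) *ᵥ ((C j) *ᵥ (x j))) + M22 *ᵥ d)))))
    ↔
    (∃ (X : ∀ i, Matrix (Fin (m i + p i)) (Fin (m i + p i)) ℝ)
       (P : ∀ i, Matrix (Fin (n i)) (Fin (n i)) ℝ),
      (∀ i, (X i).IsSymm) ∧ (∀ i, (P i).PosSemidef) ∧
      (∀ i (x : Fin (n i) → ℝ) (u : Fin (m i) → ℝ),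
        x ⬝ᵥ (((A i)ᵀ * P i + P i * A i) *ᵥ x) + 2 * (x ⬝ᵥ ((P i * B i) *ᵥ u)) ≤
          (Fin.append u ((C i) *ᵥ x)) ⬝ᵥ ((X i) *ᵥ (Fin.append u ((C i) *ᵥ x)))) ∧
      (∀ (y : ∀ j, Fin (p j) → ℝ) (d : Fin pd → ℝ),
        (∑ i, (Fin.append ((∑ j, (M11 i j) *ᵥ (y j)) + (M12 i) *ᵥ d) (y i)) ⬝ᵥ
            ((X i) *ᵥ (Fin.append ((∑ j, (M11 i j) *ᵥ (y j)) + (M12 i) *ᵥ d) (y i)))) ≤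
          (Fin.append d ((∑ j, (M21 j) *ᵥ (y j)) + M22 *ᵥ d)) ⬝ᵥ
            (W *ᵥ (Fin.append d ((∑ j, (M21 j) *ᵥ (y j)) + M22 *ᵥ d))))) := by
  classical
  constructor
  · rintro ⟨P, hP, hGlobal⟩
    have hPt : ∀ i, (P i)ᵀ = P i := by
      intro i
      have h := (hP i).isHermitian
      ext a b
      have h2 := congrFun (congrFun h a) b
      simpa using h2
    have hQsym : ∀ i, ((A i)ᵀ * P i + P i * A i)ᵀ = (A i)ᵀ * P i + P i * A i := by
      intro i
      rw [transpose_add, transpose_mul, transpose_mul, transpose_transpose, hPt i, add_comm]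
    have hCsurj : ∀ j, Function.Surjective (C j).mulVec :=
      fun j => mulVec_surj_of_li_rows (C j) (hC j)
    -- H1
    have H1 : ∀ i (v : Fin (n i) → ℝ), C i *ᵥ v = 0 →
        v ⬝ᵥ (((A i)ᵀ * P i + P i * A i) *ᵥ v) ≤ 0 := by
      intro i v hv
      have h := hGlobal (Function.update (fun j => (0 : Fin (n j) → ℝ)) i v) 0
      have hCx : ∀ j, C j *ᵥ (Function.update (fun j => (0 : Fin (n j) → ℝ)) i v j) = 0 := by
        intro j
        rcases eq_or_ne j i with rfl | hne
        · rw [Function.update_self]; exact hv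
        · rw [Function.update_of_ne hne]; exact mulVec_zero _
      simp only [hCx, mulVec_zero, Finset.sum_const_zero, add_zero, zero_add,
        dotProduct_zero, mul_zero, fin_append_zero, zero_dotProduct] at h
      calc v ⬝ᵥ (((A i)ᵀ * P i + P i * A i) *ᵥ v)
          = ∑ j, (Function.update (fun j => (0 : Fin (n j) → ℝ)) i v j) ⬝ᵥ
              (((A j)ᵀ * P j + P j * A j) *ᵥ
                (Function.update (fun j => (0 : Fin (n j) → ℝ)) i v j)) := by
            rw [Finset.sum_eq_single_of_mem i (Finset.mem_univ i)]
            · rw [Function.update_self]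
            · intro j _ hne
              rw [Function.update_of_ne hne, zero_dotProduct]
        _ ≤ 0 := h
    -- H2
    have H2 : ∀ i (v : Fin (n i) → ℝ), C i *ᵥ v = 0 →
        v ⬝ᵥ (((A i)ᵀ * P i + P i * A i) *ᵥ v) = 0 →
        ((A i)ᵀ * P i + P i * A i) *ᵥ v = 0 ∧ (P i * B i)ᵀ *ᵥ v = 0 := by
      intro i v hv hvQ
      suffices hb : ∀ (w : Fin (n i) → ℝ) (u0 : Fin (m i) → ℝ),
          v ⬝ᵥ (((A i)ᵀ * P i + P i * A i) *ᵥ w) + v ⬝ᵥ ((P i * B i) *ᵥ u0) = 0 by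
        constructor
        · funext k
          have h := hb (Pi.single k 1) 0
          rw [mulVec_zero, dotProduct_zero, add_zero,
            dot_mulVec_symm (hQsym i) v (Pi.single k 1), single_dotProduct, one_mul] at h
          simpa using h
        · funext k
          have h := hb 0 (Pi.single k 1)
          rw [mulVec_zero, dotProduct_zero, zero_add, dotProduct_mulVec,
            ← mulVec_transpose, dotProduct_single, mul_one] at h
          simpa using h
      intro w u0
      set Mhat : Matrix (Fin (m i)) ((Σ j, Fin (p j)) ⊕ Fin pd) ℝ :=
        Matrix.of (fun r => Sum.elim (fun jl : Σ j, Fin (p j) => M11 i jl.1 r jl.2)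
          (fun l : Fin pd => M12 i r l)) with hMhatdef
      have hMsurj : Function.Surjective Mhat.mulVec :=
        mulVec_surj_of_li_rows Mhat (hMrows i)
      obtain ⟨ζ, hζ⟩ := hMsurj u0
      set yy : ∀ j, Fin (p j) → ℝ := fun j l => ζ (Sum.inl ⟨j, l⟩) with hyydef
      set dd : Fin pd → ℝ := fun l => ζ (Sum.inr l) with hdddef
      have hMhat : (∑ j, M11 i j *ᵥ yy j) + M12 i *ᵥ dd = u0 := by
        rw [← hζ]
        funext r
        rw [Pi.add_apply, Finset.sum_apply]
        simp only [Matrix.mulVec, dotProduct, hMhatdef, Matrix.of_apply]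
        rw [Fintype.sum_sum_type]
        congr 1
        rw [← Finset.univ_sigma_univ, Finset.sum_sigma]
        rfl
      choose xs hxs using fun j => hCsurj j (yy j)
      set Y' : ∀ j, Fin (p j) → ℝ := Function.update yy i (C i *ᵥ w) with hY'def
      have huconi : (∑ j, M11 i j *ᵥ Y' j) + M12 i *ᵥ dd = u0 := by
        rw [← hMhat]
        congr 1
        refine Finset.sum_congr rfl fun j _ => ?_
        rcases eq_or_ne j i with rfl | hne
        · rw [hMdiag, zero_mulVec, zero_mulVec]
        · rw [hY'def, Function.update_of_ne hne]
      have hCxτ : ∀ τ : ℝ, ∀ j, C j *ᵥ (Function.update xs i (τ • v + w) j) = Y' j := by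
        intro τ j
        rcases eq_or_ne j i with rfl | hne
        · rw [Function.update_self, hY'def, Function.update_self, mulVec_add, mulVec_smul,
            hv, smul_zero, zero_add]
        · rw [Function.update_of_ne hne, hY'def, Function.update_of_ne hne, hxs]
      have key : ∃ K, ∀ τ : ℝ,
          (2*(v ⬝ᵥ (((A i)ᵀ * P i + P i * A i) *ᵥ w)) + 2*(v ⬝ᵥ ((P i * B i) *ᵥ u0))) * τ
            ≤ K := by
        refine ⟨(Fin.append dd ((∑ j, M21 j *ᵥ Y' j) + M22 *ᵥ dd)) ⬝ᵥ
            (W *ᵥ (Fin.append dd ((∑ j, M21 j *ᵥ Y' j) + M22 *ᵥ dd)))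
          - (∑ j ∈ Finset.univ.erase i, (xs j ⬝ᵥ (((A j)ᵀ * P j + P j * A j) *ᵥ xs j)
            + 2*(xs j ⬝ᵥ ((P j * B j) *ᵥ ((∑ k, M11 j k *ᵥ Y' k) + M12 j *ᵥ dd)))))
          - (w ⬝ᵥ (((A i)ᵀ * P i + P i * A i) *ᵥ w) + 2*(w ⬝ᵥ ((P i * B i) *ᵥ u0))), ?_⟩
        intro τ
        have h := hGlobal (Function.update xs i (τ • v + w)) dd
        simp only [hCxτ τ] at h
        rw [← Finset.sum_erase_add _ _ (Finset.mem_univ i)] at h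
        have h2 : (∑ j ∈ Finset.univ.erase i,
            ((Function.update xs i (τ • v + w) j) ⬝ᵥ (((A j)ᵀ * P j + P j * A j) *ᵥ
                (Function.update xs i (τ • v + w) j))
              + 2 * ((Function.update xs i (τ • v + w) j) ⬝ᵥ ((P j * B j) *ᵥ
                  ((∑ k, M11 j k *ᵥ Y' k) + M12 j *ᵥ dd)))))
            = ∑ j ∈ Finset.univ.erase i, (xs j ⬝ᵥ (((A j)ᵀ * P j + P j * A j) *ᵥ xs j)
            + 2*(xs j ⬝ᵥ ((P j * B j) *ᵥ ((∑ k, M11 j k *ᵥ Y' k) + M12 j *ᵥ dd)))) := by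
          refine Finset.sum_congr rfl fun j hj => ?_
          rw [Function.update_of_ne (Finset.ne_of_mem_erase hj)]
        rw [h2, Function.update_self, huconi] at h
        simp only [mulVec_add, mulVec_smul, dotProduct_add, add_dotProduct,
          dotProduct_smul, smul_dotProduct, smul_eq_mul] at h
        rw [hvQ, dot_mulVec_symm (hQsym i) w v] at h
        have h3 : (∑ x ∈ Finset.univ.erase i,
            (xs x ⬝ᵥ (((A x)ᵀ * P x + P x * A x) *ᵥ xs x) +
              2 * (xs x ⬝ᵥ ((P x * B x) *ᵥ (∑ k, M11 x k *ᵥ Y' k)) +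
                   xs x ⬝ᵥ ((P x * B x) *ᵥ (M12 x *ᵥ dd)))))
            = ∑ j ∈ Finset.univ.erase i, (xs j ⬝ᵥ (((A j)ᵀ * P j + P j * A j) *ᵥ xs j)
              + 2*(xs j ⬝ᵥ ((P j * B j) *ᵥ ((∑ k, M11 j k *ᵥ Y' k) + M12 j *ᵥ dd)))) := by
          refine Finset.sum_congr rfl fun j _ => ?_
          rw [mulVec_add, dotProduct_add]
        rw [h3] at h
        linarith
      obtain ⟨K, hK⟩ := key
      have hb0 := lin_bound_zero hK
      linarith
    -- apply lemmaA
    choose X hXsym hXle hXeq using fun i =>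
      lemmaA ((A i)ᵀ * P i + P i * A i) (hQsym i) (P i * B i) (C i) (hCsurj i) (H1 i) (H2 i)
    refine ⟨X, P, hXsym, hP, hXle, ?_⟩
    intro y d
    choose xx hCxx heq using fun i =>
      hXeq i ((∑ j, (M11 i j) *ᵥ (y j)) + (M12 i) *ᵥ d) (y i)
    have h := hGlobal xx d
    simp only [hCxx] at h
    calc (∑ i, (Fin.append ((∑ j, (M11 i j) *ᵥ (y j)) + (M12 i) *ᵥ d) (y i)) ⬝ᵥ
            ((X i) *ᵥ (Fin.append ((∑ j, (M11 i j) *ᵥ (y j)) + (M12 i) *ᵥ d) (y i))))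
        = ∑ i, ((xx i) ⬝ᵥ (((A i)ᵀ * P i + P i * A i) *ᵥ (xx i))
              + 2 * ((xx i) ⬝ᵥ ((P i * B i) *ᵥ
                  ((∑ j, (M11 i j) *ᵥ (y j)) + (M12 i) *ᵥ d)))) := by
          refine Finset.sum_congr rfl fun i _ => ?_
          exact (heq i).symm
      _ ≤ _ := h
  · rintro ⟨X, P, hXs, hPs, hloc, hglob⟩
    refine ⟨P, hPs, ?_⟩
    intro x d
    calc (∑ i, ((x i) ⬝ᵥ (((A i)ᵀ * P i + P i * A i) *ᵥ (x i))
              + 2 * ((x i) ⬝ᵥ ((P i * B i) *ᵥ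
                  ((∑ j, (M11 i j) *ᵥ ((C j) *ᵥ (x j))) + (M12 i) *ᵥ d)))))
        ≤ ∑ i, (Fin.append ((∑ j, (M11 i j) *ᵥ ((C j) *ᵥ (x j))) + (M12 i) *ᵥ d)
              ((C i) *ᵥ (x i))) ⬝ᵥ ((X i) *ᵥ
              (Fin.append ((∑ j, (M11 i j) *ᵥ ((C j) *ᵥ (x j))) + (M12 i) *ᵥ d)
              ((C i) *ᵥ (x i)))) := by
          refine Finset.sum_le_sum fun i _ => ?_
          exact hloc i (x i) _
      _ ≤ _ := hglob (fun j => (C j) *ᵥ (x j)) d
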